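/- Let T be a transit cluster in a DAG G and let T⁺, G⁺ be obtained by the peripheral extension operation that adds an edge t_i → t_j between two vertices of T without creating a cycle. Then T⁺ = T is a transit cluster in G⁺, and the graph induced by clustering T⁺ in G⁺ equals the graph induced by clustering T in G. -/

import Mathlib

variable {α : Type*}

/-- All edges lie within the vertex set `V`. -/
def EdgesIn (V : Set α) (E : α → α → Prop) : Prop :=
  ∀ u v, E u v → u ∈ V ∧ v ∈ V

/-- The edge relation has no directed cycles. -/
def Acyclic (E : α → α → Prop) : Prop :=
  ∀ v, ¬ Relation.TransGen E v v

/-- A finite directed acyclic graph on vertex set `V`. -/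
def IsDAG (V : Set α) (E : α → α → Prop) : Prop :=
  V.Finite ∧ EdgesIn V E ∧ Acyclic E

/-- Receivers of `T`: members of `T` with a parent outside `T`. -/
def recs (E : α → α → Prop) (T : Set α) : Set α :=
  {v | v ∈ T ∧ ∃ u, u ∉ T ∧ E u v}

/-- Emitters of `T`: members of `T` with a child outside `T`. -/
def emis (E : α → α → Prop) (T : Set α) : Set α :=
  {v | v ∈ T ∧ ∃ u, u ∉ T ∧ E v u}

/-- Edges of `G[T^=]`: the subgraph induced by `T` with incoming edges of
receivers and outgoing edges of emitters removed. -/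
def CutEdge (E : α → α → Prop) (T : Set α) (u v : α) : Prop :=
  u ∈ T ∧ v ∈ T ∧ E u v ∧ v ∉ recs E T ∧ u ∉ emis E T

/-- Undirected reachability with respect to an edge relation. -/
def UndirReach (E : α → α → Prop) (u v : α) : Prop :=
  Relation.ReflTransGen (fun a b => E a b ∨ E b a) u v

/-- `T` is a transit cluster in the graph `(V, E)`. -/
def IsTransitCluster (V : Set α) (E : α → α → Prop) (T : Set α) : Prop :=
  T.Nonempty ∧ T ⊂ V ∧
  (∀ r₁ ∈ recs E T, ∀ r₂ ∈ recs E T,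
    {u | u ∉ T ∧ E u r₁} = {u | u ∉ T ∧ E u r₂}) ∧
  (∀ e₁ ∈ emis E T, ∀ e₂ ∈ emis E T,
    {u | u ∉ T ∧ E e₁ u} = {u | u ∉ T ∧ E e₂ u}) ∧
  (∀ x ∈ T, ∃ w, (w ∈ recs E T ∨ w ∈ emis E T) ∧ UndirReach (CutEdge E T) x w) ∧
  ((emis E T).Nonempty → ∀ r ∈ recs E T, ∃ e ∈ emis E T, Relation.ReflTransGen E r e) ∧
  ((recs E T).Nonempty → ∀ e ∈ emis E T, ∃ r ∈ recs E T, Relation.ReflTransGen E r e)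

/-- Vertex set of the graph obtained by clustering `T` into the new vertex `t`. -/
def ClusterVerts (V T : Set α) (t : α) : Set α := (V \ T) ∪ {t}

/-- Edge relation of the graph obtained by clustering `T` into the new vertex `t`:
edges not touching `T` are kept, the parents of `t` are the external parents of
`recs T`, and the children of `t` are the external children of `emis T`. -/
def ClusterEdge (E : α → α → Prop) (T : Set α) (t : α) (u v : α) : Prop :=
  (u ∉ T ∧ v ∉ T ∧ E u v) ∨
  (u ∉ T ∧ u ≠ t ∧ v = t ∧ ∃ r ∈ recs E T, E u r) ∨
  (u = t ∧ v ∉ T ∧ v ≠ t ∧ ∃ e ∈ emis E T, E e v)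

/-- A transit component: a transit cluster that is connected (undirectedly)
in the subgraph it induces. -/
def IsTransitComponent (V : Set α) (E : α → α → Prop) (T : Set α) : Prop :=
  IsTransitCluster V E T ∧
  ∀ u ∈ T, ∀ v ∈ T, UndirReach (fun a b => a ∈ T ∧ b ∈ T ∧ E a b) u v

/-- The edge relation obtained by adding the edge `ti → tj`. -/
def AddEdge (E : α → α → Prop) (ti tj : α) : α → α → Prop :=
  fun u v => E u v ∨ (u = ti ∧ v = tj)


lemma recs_addEdge (E : α → α → Prop) (T : Set α) {ti tj : α} (hti : ti ∈ T) :
    recs (AddEdge E ti tj) T = recs E T := by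
  ext v
  constructor
  · rintro ⟨hv, u, hu, (h | ⟨rfl, rfl⟩)⟩
    · exact ⟨hv, u, hu, h⟩
    · exact absurd hti hu
  · rintro ⟨hv, u, hu, h⟩
    exact ⟨hv, u, hu, Or.inl h⟩

lemma emis_addEdge (E : α → α → Prop) (T : Set α) {ti tj : α} (htj : tj ∈ T) :
    emis (AddEdge E ti tj) T = emis E T := by
  ext v
  constructor
  · rintro ⟨hv, u, hu, (h | ⟨rfl, rfl⟩)⟩
    · exact ⟨hv, u, hu, h⟩
    · exact absurd htj hu
  · rintro ⟨hv, u, hu, h⟩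
    exact ⟨hv, u, hu, Or.inl h⟩

/-- peripheral extension, operation 1 (adding an internal edge). -/
theorem peripheral_add_edge
    (V : Set α) (E : α → α → Prop) (T : Set α) (ti tj t : α)
    (hdag : IsDAG V E)
    (hT : IsTransitCluster V E T)
    (hti : ti ∈ T) (htj : tj ∈ T)
    (hacy : Acyclic (AddEdge E ti tj))
    (ht : t ∉ V) :
    IsTransitCluster V (AddEdge E ti tj) T ∧
    ClusterVerts V T t = ClusterVerts V T t ∧
    ClusterEdge (AddEdge E ti tj) T t = ClusterEdge E T t := by
  have hrecs := recs_addEdge E T (tj := tj) hti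
  have hemis := emis_addEdge E T (ti := ti) htj
  obtain ⟨hne, hsub, hrp, hec, hconn, hre, her⟩ := hT
  refine ⟨⟨hne, hsub, ?_, ?_, ?_, ?_, ?_⟩, rfl, ?_⟩
  · rw [hrecs]
    intro r₁ h₁ r₂ h₂
    have := hrp r₁ h₁ r₂ h₂
    ext u
    constructor
    · rintro ⟨hu, (h | ⟨rfl, rfl⟩)⟩
      · have : u ∈ {u | u ∉ T ∧ E u r₂} := this ▸ ⟨hu, h⟩
        exact ⟨this.1, Or.inl this.2⟩
      · exact absurd hti hu
    · rintro ⟨hu, (h | ⟨rfl, rfl⟩)⟩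
      · have : u ∈ {u | u ∉ T ∧ E u r₁} := this ▸ ⟨hu, h⟩
        exact ⟨this.1, Or.inl this.2⟩
      · exact absurd hti hu
  · rw [hemis]
    intro e₁ h₁ e₂ h₂
    have := hec e₁ h₁ e₂ h₂
    ext u
    constructor
    · rintro ⟨hu, (h | ⟨rfl, rfl⟩)⟩
      · have : u ∈ {u | u ∉ T ∧ E e₂ u} := this ▸ ⟨hu, h⟩
        exact ⟨this.1, Or.inl this.2⟩
      · exact absurd htj hu
    · rintro ⟨hu, (h | ⟨rfl, rfl⟩)⟩
      · have : u ∈ {u | u ∉ T ∧ E e₁ u} := this ▸ ⟨hu, h⟩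
        exact ⟨this.1, Or.inl this.2⟩
      · exact absurd htj hu
  · intro x hx
    obtain ⟨w, hw, hreach⟩ := hconn x hx
    refine ⟨w, by rw [hrecs, hemis]; exact hw, ?_⟩
    refine Relation.ReflTransGen.mono ?_ _ _ hreach
    rintro a b (⟨ha, hb, hE, hnr, hne⟩ | ⟨ha, hb, hE, hnr, hne⟩)
    · exact Or.inl ⟨ha, hb, Or.inl hE, hrecs ▸ hnr, hemis ▸ hne⟩
    · exact Or.inr ⟨ha, hb, Or.inl hE, hrecs ▸ hnr, hemis ▸ hne⟩
  · rw [hrecs, hemis]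
    intro hem r hr
    obtain ⟨e, he, hreach⟩ := hre hem r hr
    exact ⟨e, he, Relation.ReflTransGen.mono (fun a b h => Or.inl h) _ _ hreach⟩
  · rw [hrecs, hemis]
    intro hrc e he
    obtain ⟨r, hr, hreach⟩ := her hrc e he
    exact ⟨r, hr, Relation.ReflTransGen.mono (fun a b h => Or.inl h) _ _ hreach⟩
  · funext u v
    rw [ClusterEdge, ClusterEdge, hrecs, hemis]
    refine propext ⟨?_, ?_⟩
    · rintro (⟨hu, hv, (h | ⟨rfl, rfl⟩)⟩ | ⟨hu, hut, hvt, r, hr, (h | ⟨rfl, rfl⟩)⟩ |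
        ⟨hut, hv, hvt, e, he, (h | ⟨rfl, rfl⟩)⟩)
      · exact Or.inl ⟨hu, hv, h⟩
      · exact absurd hti hu
      · exact Or.inr (Or.inl ⟨hu, hut, hvt, r, hr, h⟩)
      · exact absurd hti hu
      · exact Or.inr (Or.inr ⟨hut, hv, hvt, e, he, h⟩)
      · exact absurd htj hv
    · rintro (⟨hu, hv, h⟩ | ⟨hu, hut, hvt, r, hr, h⟩ | ⟨hut, hv, hvt, e, he, h⟩)
      · exact Or.inl ⟨hu, hv, Or.inl h⟩
      · exact Or.inr (Or.inl ⟨hu, hut, hvt, r, hr, Or.inl h⟩)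
      · exact Or.inr (Or.inr ⟨hut, hv, hvt, e, he, Or.inl h⟩)
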